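/- arXiv:0806.4415 — 6 statements merged into one kernel-verified Lean document; each statement's English description precedes it below -/
import Mathlib

section
/- Let f, g : [x₁, x₂] → ℝ be nonnegative, strictly increasing, differentiable functions such that the ratio f'(x)/g'(x) is decreasing on [x₁, x₂]. Let u ∈ [0,1] and let x_int ∈ [x₁, x₂] satisfy f(x_int) = u·f(x₁) + (1-u)·f(x₂). Then g(x_int) ≤ u·g(x₁) + (1-u)·g(x₂). -/
open Set

theorem stmt_0 (x₁ x₂ : ℝ) (hx : x₁ < x₂) (f g f' g' : ℝ → ℝ)
    (hf0 : ∀ x ∈ Icc x₁ x₂, 0 ≤ f x) (hg0 : ∀ x ∈ Icc x₁ x₂, 0 ≤ g x)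
    (hfmono : StrictMonoOn f (Icc x₁ x₂)) (hgmono : StrictMonoOn g (Icc x₁ x₂))
    (hfd : ∀ x ∈ Icc x₁ x₂, HasDerivWithinAt f (f' x) (Icc x₁ x₂) x)
    (hgd : ∀ x ∈ Icc x₁ x₂, HasDerivWithinAt g (g' x) (Icc x₁ x₂) x)
    (hgpos : ∀ x ∈ Icc x₁ x₂, 0 < g' x)
    (hratio : AntitoneOn (fun x => f' x / g' x) (Icc x₁ x₂))
    (u : ℝ) (hu : u ∈ Icc (0 : ℝ) 1)
    (xint : ℝ) (hxint : xint ∈ Icc x₁ x₂)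
    (heq : f xint = u * f x₁ + (1 - u) * f x₂) :
    g xint ≤ u * g x₁ + (1 - u) * g x₂ := by
  have hx1 : x₁ ∈ Icc x₁ x₂ := ⟨le_refl _, le_of_lt hx⟩
  have hx2 : x₂ ∈ Icc x₁ x₂ := ⟨le_of_lt hx, le_refl _⟩
  have hfc : ContinuousOn f (Icc x₁ x₂) := fun x hx => (hfd x hx).continuousWithinAt
  have hgc : ContinuousOn g (Icc x₁ x₂) := fun x hx => (hgd x hx).continuousWithinAt
  -- Key inequality
  have hkey : (f x₂ - f xint) * (g xint - g x₁) ≤ (f xint - f x₁) * (g x₂ - g xint) := by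
    rcases eq_or_lt_of_le hxint.1 with h1 | h1
    · subst h1; simp
    rcases eq_or_lt_of_le hxint.2 with h2 | h2
    · rw [h2]; simp
    -- interior case
    obtain ⟨c₁, hc₁, hc₁eq⟩ := exists_ratio_hasDerivAt_eq_ratio_slope f f' h1
      (hfc.mono (Icc_subset_Icc le_rfl hxint.2))
      (fun x hxm => (hfd x ⟨le_of_lt hxm.1, le_trans (le_of_lt hxm.2) hxint.2⟩).hasDerivAt
        (Icc_mem_nhds hxm.1 (lt_of_lt_of_le hxm.2 hxint.2)))
      g g' (hgc.mono (Icc_subset_Icc le_rfl hxint.2))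
      (fun x hxm => (hgd x ⟨le_of_lt hxm.1, le_trans (le_of_lt hxm.2) hxint.2⟩).hasDerivAt
        (Icc_mem_nhds hxm.1 (lt_of_lt_of_le hxm.2 hxint.2)))
    obtain ⟨c₂, hc₂, hc₂eq⟩ := exists_ratio_hasDerivAt_eq_ratio_slope f f' h2
      (hfc.mono (Icc_subset_Icc hxint.1 le_rfl))
      (fun x hxm => (hfd x ⟨le_trans hxint.1 (le_of_lt hxm.1), le_of_lt hxm.2⟩).hasDerivAt
        (Icc_mem_nhds (lt_of_le_of_lt hxint.1 hxm.1) hxm.2))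
      g g' (hgc.mono (Icc_subset_Icc hxint.1 le_rfl))
      (fun x hxm => (hgd x ⟨le_trans hxint.1 (le_of_lt hxm.1), le_of_lt hxm.2⟩).hasDerivAt
        (Icc_mem_nhds (lt_of_le_of_lt hxint.1 hxm.1) hxm.2))
    have hc₁m : c₁ ∈ Icc x₁ x₂ := ⟨le_of_lt hc₁.1, le_trans (le_of_lt hc₁.2) hxint.2⟩
    have hc₂m : c₂ ∈ Icc x₁ x₂ := ⟨le_trans hxint.1 (le_of_lt hc₂.1), le_of_lt hc₂.2⟩
    have hc₁₂ : c₁ ≤ c₂ := le_of_lt (lt_trans hc₁.2 hc₂.1)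
    have hr := hratio hc₁m hc₂m hc₁₂
    simp only at hr
    have hg1 : 0 < g' c₁ := hgpos c₁ hc₁m
    have hg2 : 0 < g' c₂ := hgpos c₂ hc₂m
    have hB : 0 < g xint - g x₁ := sub_pos.mpr (hgmono hx1 hxint h1)
    have hD : 0 < g x₂ - g xint := sub_pos.mpr (hgmono hxint hx2 h2)
    -- A = B * r₁, C = D * r₂ with r₁ ≥ r₂
    have hA : f xint - f x₁ = (g xint - g x₁) * (f' c₁ / g' c₁) := by
      field_simp; linarith [hc₁eq]
    have hC : f x₂ - f xint = (g x₂ - g xint) * (f' c₂ / g' c₂) := by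
      field_simp; linarith [hc₂eq]
    rw [hA, hC]
    nlinarith [mul_pos hB hD]
  have hf12 : f x₁ < f x₂ := hfmono hx1 hx2 hx
  have hu0 : 0 ≤ u := hu.1
  have hu1 : u ≤ 1 := hu.2
  have hA' : f xint - f x₁ = (1 - u) * (f x₂ - f x₁) := by rw [heq]; ring
  have hC' : f x₂ - f xint = u * (f x₂ - f x₁) := by rw [heq]; ring
  rw [hA', hC'] at hkey
  have hfin : u * (g xint - g x₁) ≤ (1 - u) * (g x₂ - g xint) := by
    have := mul_le_mul_of_nonneg_left hkey (le_of_lt (inv_pos.mpr (sub_pos.mpr hf12)))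
    have h0 : f x₂ - f x₁ ≠ 0 := ne_of_gt (sub_pos.mpr hf12)
    field_simp at this
    nlinarith [sub_pos.mpr hf12]
  nlinarith [hfin]
end

section
/- Let f, g : [x₁, x₂] → ℝ be nonnegative, strictly increasing, differentiable functions with f'/g' decreasing. For any finite collection of weights uᵢ ≥ 0 with ∑ uᵢ = 1 and points yᵢ ∈ [x₁, x₂], if x_int ∈ [x₁, x₂] satisfies f(x_int) = ∑ uᵢ f(yᵢ), then g(x_int) ≤ ∑ uᵢ g(yᵢ). -/
open Set

theorem stmt_1 (x₁ x₂ : ℝ) (hx : x₁ < x₂) (f g f' g' : ℝ → ℝ)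
    (hf0 : ∀ x ∈ Icc x₁ x₂, 0 ≤ f x) (hg0 : ∀ x ∈ Icc x₁ x₂, 0 ≤ g x)
    (hfmono : StrictMonoOn f (Icc x₁ x₂)) (hgmono : StrictMonoOn g (Icc x₁ x₂))
    (hfd : ∀ x ∈ Icc x₁ x₂, HasDerivWithinAt f (f' x) (Icc x₁ x₂) x)
    (hgd : ∀ x ∈ Icc x₁ x₂, HasDerivWithinAt g (g' x) (Icc x₁ x₂) x)
    (hgpos : ∀ x ∈ Icc x₁ x₂, 0 < g' x)
    (hratio : AntitoneOn (fun x => f' x / g' x) (Icc x₁ x₂))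
    (ι : Type*) (s : Finset ι) (u : ι → ℝ) (y : ι → ℝ)
    (hu : ∀ i ∈ s, 0 ≤ u i) (husum : ∑ i ∈ s, u i = 1)
    (hy : ∀ i ∈ s, y i ∈ Icc x₁ x₂)
    (xint : ℝ) (hxint : xint ∈ Icc x₁ x₂)
    (heq : f xint = ∑ i ∈ s, u i * f (y i)) :
    g xint ≤ ∑ i ∈ s, u i * g (y i) := by
  have hfc : ContinuousOn f (Icc x₁ x₂) := fun z hz => (hfd z hz).continuousWithinAt
  have hgc : ContinuousOn g (Icc x₁ x₂) := fun z hz => (hgd z hz).continuousWithinAt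
  have hder : ∀ a b : ℝ, x₁ ≤ a → b ≤ x₂ → ∀ z ∈ Ioo a b,
      HasDerivAt f (f' z) z ∧ HasDerivAt g (g' z) z := by
    intro a b ha hb z hz
    have hz1 : x₁ < z := lt_of_le_of_lt ha hz.1
    have hz2 : z < x₂ := lt_of_lt_of_le hz.2 hb
    have hmem : Icc x₁ x₂ ∈ nhds z := Icc_mem_nhds hz1 hz2
    have hzI : z ∈ Icc x₁ x₂ := ⟨hz1.le, hz2.le⟩
    exact ⟨(hfd z hzI).hasDerivAt hmem, (hgd z hzI).hasDerivAt hmem⟩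
  -- Cauchy MVT on a subinterval
  have cauchy : ∀ a b : ℝ, a ∈ Icc x₁ x₂ → b ∈ Icc x₁ x₂ → a < b →
      ∃ c ∈ Ioo a b, (g b - g a) * f' c = (f b - f a) * g' c := by
    intro a b haI hbI hab
    have hsub : Icc a b ⊆ Icc x₁ x₂ := Icc_subset_Icc haI.1 hbI.2
    exact exists_ratio_hasDerivAt_eq_ratio_slope f f' hab (hfc.mono hsub)
      (fun z hz => (hder a b haI.1 hbI.2 z hz).1) g g' (hgc.mono hsub)
      (fun z hz => (hder a b haI.1 hbI.2 z hz).2)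
  rcases lt_or_ge 0 (f' xint) with hKpos | hKnonpos
  · -- main case
    set K := f' xint / g' xint with hKdef
    have hK : 0 < K := div_pos hKpos (hgpos xint hxint)
    have claim : ∀ z ∈ Icc x₁ x₂, f z - f xint ≤ K * (g z - g xint) := by
      intro z hz
      rcases lt_trichotomy z xint with hlt | heqz | hgt
      · obtain ⟨c, hc, hcc⟩ := cauchy z xint hz hxint hlt
        have hcI : c ∈ Icc x₁ x₂ := ⟨le_trans hz.1 hc.1.le, le_trans hc.2.le hxint.2⟩
        have hrat : K ≤ f' c / g' c := hratio hcI hxint hc.2.le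
        have hgc' : 0 < g' c := hgpos c hcI
        have hgd' : 0 < g xint - g z := sub_pos.mpr (hgmono hz hxint hlt)
        have hfx : f xint - f z = (g xint - g z) * (f' c / g' c) := by
          field_simp
          linarith [hcc]
        nlinarith [mul_le_mul_of_nonneg_left hrat hgd'.le]
      · simp [heqz]
      · obtain ⟨c, hc, hcc⟩ := cauchy xint z hxint hz hgt
        have hcI : c ∈ Icc x₁ x₂ := ⟨le_trans hxint.1 hc.1.le, le_trans hc.2.le hz.2⟩
        have hrat : f' c / g' c ≤ K := hratio hxint hcI hc.1.le
        have hgc' : 0 < g' c := hgpos c hcI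
        have hgd' : 0 < g z - g xint := sub_pos.mpr (hgmono hxint hz hgt)
        have hfx : f z - f xint = (g z - g xint) * (f' c / g' c) := by
          field_simp
          linarith [hcc]
        nlinarith [mul_le_mul_of_nonneg_left hrat hgd'.le]
    have hsum : ∑ i ∈ s, u i * (f (y i) - f xint) ≤
        ∑ i ∈ s, u i * (K * (g (y i) - g xint)) :=
      Finset.sum_le_sum (fun i hi =>
        mul_le_mul_of_nonneg_left (claim (y i) (hy i hi)) (hu i hi))
    have hL : ∑ i ∈ s, u i * (f (y i) - f xint) = 0 := by
      simp only [mul_sub]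
      rw [Finset.sum_sub_distrib, ← Finset.sum_mul, husum, heq]
      ring
    have hR : ∑ i ∈ s, u i * (K * (g (y i) - g xint)) =
        K * ((∑ i ∈ s, u i * g (y i)) - g xint) := by
      have hrw : ∀ i ∈ s, u i * (K * (g (y i) - g xint))
          = K * (u i * g (y i)) - K * g xint * u i := fun i _ => by ring
      rw [Finset.sum_congr rfl hrw, Finset.sum_sub_distrib, ← Finset.mul_sum,
        ← Finset.mul_sum, husum]
      ring
    have hfin : 0 ≤ K * ((∑ i ∈ s, u i * g (y i)) - g xint) := by
      rw [← hR, ← hL]; exact hsum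
    nlinarith [hfin, hK]
  · -- degenerate case: f' xint ≤ 0 forces xint = x₂
    have hx2 : xint = x₂ := by
      by_contra hne
      have hlt : xint < x₂ := lt_of_le_of_ne hxint.2 hne
      have hfp : ∀ z ∈ Icc x₁ x₂, xint ≤ z → f' z ≤ 0 := by
        intro z hz hzx
        have := hratio hxint hz hzx
        have hgz := hgpos z hz
        have : f' z / g' z ≤ f' xint / g' xint := this
        have h0 : f' xint / g' xint ≤ 0 :=
          div_nonpos_iff.mpr (Or.inr ⟨hKnonpos, (hgpos xint hxint).le⟩)
        have : f' z / g' z ≤ 0 := le_trans this h0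
        have hmul := mul_le_mul_of_nonneg_right this hgz.le
        rwa [div_mul_cancel₀ _ hgz.ne', zero_mul] at hmul
      obtain ⟨c, hc, hcc⟩ := exists_hasDerivAt_eq_slope f f' hlt
        (hfc.mono (Icc_subset_Icc hxint.1 le_rfl))
        (fun z hz => (hder xint x₂ hxint.1 le_rfl z hz).1)
      have hcI : c ∈ Icc x₁ x₂ := ⟨le_trans hxint.1 hc.1.le, hc.2.le⟩
      have hslope : 0 < (f x₂ - f xint) / (x₂ - xint) :=
        div_pos (sub_pos.mpr (hfmono hxint (right_mem_Icc.mpr hx.le) hlt))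
          (sub_pos.mpr hlt)
      have := hfp c hcI hc.1.le
      linarith [hcc ▸ this]
    -- xint = x₂ : each y i with u i > 0 must equal x₂
    subst hx2
    have hterm : ∀ i ∈ s, u i * (f xint - f (y i)) = 0 := by
      have hsum0 : ∑ i ∈ s, u i * (f xint - f (y i)) = 0 := by
        simp only [mul_sub]
        rw [Finset.sum_sub_distrib, ← Finset.sum_mul, husum, heq]
        ring
      intro i hi
      refine (Finset.sum_eq_zero_iff_of_nonneg ?_).mp hsum0 i hi
      intro j hj
      exact mul_nonneg (hu j hj)
        (sub_nonneg.mpr ((hfmono.monotoneOn) (hy j hj) hxint (hy j hj).2))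
    have hgterm : ∀ i ∈ s, u i * g (y i) = u i * g xint := by
      intro i hi
      rcases eq_or_lt_of_le (hu i hi) with h0 | hpos
      · rw [← h0]; ring
      · have hf0' : f xint - f (y i) = 0 := by
          have := hterm i hi
          rcases mul_eq_zero.mp this with h | h
          · exact absurd h.symm hpos.ne
          · exact h
        have : y i = xint := hfmono.injOn (hy i hi) hxint (by linarith [hf0'])
        rw [this]
    calc g xint = ∑ i ∈ s, u i * g xint := by rw [← Finset.sum_mul, husum, one_mul]
    _ = ∑ i ∈ s, u i * g (y i) := (Finset.sum_congr rfl hgterm).symm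
    _ ≤ _ := le_rfl
end

section
/- The function f(x) = h(x/2) + h((1-x)/2) - 1 is strictly increasing on [0, 1/2], where h is the binary entropy function. -/
open Set

noncomputable def binent (x : ℝ) : ℝ := -x * Real.logb 2 x - (1 - x) * Real.logb 2 (1 - x)

lemma binent_eq (x : ℝ) : binent x = Real.binEntropy x / Real.log 2 := by
  simp [binent, Real.binEntropy, Real.logb, Real.log_inv]
  ring

theorem stmt_6 :
    StrictMonoOn (fun x => binent (x / 2) + binent ((1 - x) / 2) - 1) (Icc (0 : ℝ) (1 / 2)) := by
  have hlog2 : (0:ℝ) < Real.log 2 := Real.log_pos (by norm_num)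
  have heq : (fun x : ℝ => binent (x / 2) + binent ((1 - x) / 2) - 1)
      = fun x => (Real.binEntropy (x / 2) + Real.binEntropy ((1 - x) / 2)) / Real.log 2 - 1 := by
    funext x; simp [binent_eq]; ring
  rw [heq]
  apply strictMonoOn_of_deriv_pos (convex_Icc _ _)
  · fun_prop
  · intro x hx
    rw [interior_Icc] at hx
    obtain ⟨hx0, hx1⟩ := hx
    have h1 : x / 2 ≠ 0 := by positivity
    have h2 : x / 2 ≠ 1 := by nlinarith
    have h3 : (1 - x) / 2 ≠ 0 := by intro h; nlinarith
    have h4 : (1 - x) / 2 ≠ 1 := by intro h; nlinarith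
    have d1 : HasDerivAt (fun x : ℝ => Real.binEntropy (x / 2))
        ((Real.log (1 - x / 2) - Real.log (x / 2)) * (1 / 2)) x := by
      exact (Real.hasDerivAt_binEntropy h1 h2).comp x
        ((hasDerivAt_id x).div_const 2)
    have d2 : HasDerivAt (fun x : ℝ => Real.binEntropy ((1 - x) / 2))
        ((Real.log (1 - (1 - x) / 2) - Real.log ((1 - x) / 2)) * (-1 / 2)) x := by
      have inner : HasDerivAt (fun x : ℝ => (1 - x) / 2) (-1 / 2) x := by
        have := ((hasDerivAt_const x (1:ℝ)).sub (hasDerivAt_id x)).div_const 2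
        simpa using this
      exact (Real.hasDerivAt_binEntropy h3 h4).comp x inner
    have d : HasDerivAt (fun x : ℝ =>
        (Real.binEntropy (x / 2) + Real.binEntropy ((1 - x) / 2)) / Real.log 2 - 1)
        (((Real.log (1 - x / 2) - Real.log (x / 2)) * (1 / 2)
          + (Real.log (1 - (1 - x) / 2) - Real.log ((1 - x) / 2)) * (-1 / 2)) / Real.log 2) x :=
      ((d1.add d2).div_const _).sub_const 1
    rw [d.deriv]
    apply div_pos _ hlog2
    have key : Real.log (x / 2) + Real.log (1 - (1 - x) / 2)
        < Real.log (1 - x / 2) + Real.log ((1 - x) / 2) := by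
      rw [← Real.log_mul (by positivity) (by intro h; nlinarith),
        ← Real.log_mul (by intro h; nlinarith) h3]
      apply Real.log_lt_log (by nlinarith)
      nlinarith
    linarith
end

section
/- For p ∈ [1/6, 1/2) and x ∈ (0, 1/2), the inequality J(x*p)·U(x*p)/(1-2p) ≥ 2(J(x/2) - J((1-x)/2)) / (1/U(x/2) + 1/U((1-x)/2)) holds, with equality in the limit x → 1/2, where J(t) = log((1-t)/t), U(t) = t(1-t), and x*p = x(1-p) + (1-x)p. -/
open Set Filter

noncomputable def J (t : ℝ) : ℝ := Real.log ((1 - t) / t)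

noncomputable def U (t : ℝ) : ℝ := t * (1 - t)

noncomputable def bconv (x p : ℝ) : ℝ := x * (1 - p) + (1 - x) * p

lemma deriv_aux {g g' : ℝ → ℝ} {u : ℝ} (hu : 0 < u)
    (hd : ∀ t ∈ Set.Icc (0:ℝ) u, HasDerivAt g (g' t) t)
    (hpos : ∀ t ∈ Set.Ioo (0:ℝ) u, 0 ≤ g' t) : g 0 ≤ g u := by
  have hmono := monotoneOn_of_deriv_nonneg (convex_Icc 0 u)
    (fun t ht => (hd t ht).continuousAt.continuousWithinAt)
    (fun t ht => ((hd t (interior_subset ht)).differentiableAt).differentiableWithinAt)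
    (fun t ht => by
      rw [(hd t (interior_subset ht)).deriv]
      exact hpos t (by simpa [interior_Icc] using ht))
  exact hmono (Set.left_mem_Icc.2 hu.le) (Set.right_mem_Icc.2 hu.le) hu.le

lemma L1 {u : ℝ} (hu0 : 0 < u) (hu1 : u < 1) :
    2*u + 2*u^3/3 + 2*u^5/5 + 2*u^7/7 ≤ Real.log ((1+u)/(1-u)) := by
  rw [Real.log_div (by linarith) (by linarith)]
  have key := deriv_aux (g := fun t => Real.log (1+t) - Real.log (1-t)
      - (2*t + 2*t^3/3 + 2*t^5/5 + 2*t^7/7))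
    (g' := fun t => (1+t)⁻¹ + (1-t)⁻¹ - (2 + 2*t^2 + 2*t^4 + 2*t^6)) hu0
    (fun t ht => by
      obtain ⟨ht0, htu⟩ := ht
      have h1 : (1:ℝ) + t ≠ 0 := by linarith
      have h2 : (1:ℝ) - t ≠ 0 := by nlinarith
      have d1 : HasDerivAt (fun t : ℝ => Real.log (1+t)) ((1+t)⁻¹) t := by
        simpa [Function.comp_def] using (Real.hasDerivAt_log h1).comp t ((hasDerivAt_id t).const_add 1)
      have d2 : HasDerivAt (fun t : ℝ => Real.log (1-t)) (-(1-t)⁻¹) t := by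
        simpa [Function.comp_def] using (Real.hasDerivAt_log h2).comp t ((hasDerivAt_id t).const_sub 1)
      have d3 : HasDerivAt (fun t : ℝ => 2*t + 2*t^3/3 + 2*t^5/5 + 2*t^7/7)
          (2 + 2*t^2 + 2*t^4 + 2*t^6) t := by
        have := (((hasDerivAt_id t).const_mul 2).add
          ((((hasDerivAt_pow 3 t).const_mul 2).div_const 3))).add
          (((hasDerivAt_pow 5 t).const_mul 2).div_const 5) |>.add
          (((hasDerivAt_pow 7 t).const_mul 2).div_const 7)
        refine this.congr_deriv ?_
        ring
      have := (d1.sub d2).sub d3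
      refine this.congr_deriv ?_
      ring)
    (fun t ht => by
      obtain ⟨ht0, htu⟩ := ht
      have h1 : (0:ℝ) < 1 + t := by linarith
      have h2 : (0:ℝ) < 1 - t := by nlinarith
      have key : (1+t)⁻¹ + (1-t)⁻¹ - (2 + 2*t^2 + 2*t^4 + 2*t^6)
          = 2*t^8/((1+t)*(1-t)) := by
        field_simp
        ring
      rw [key]
      positivity)
  simp only [add_zero, sub_zero, Real.log_one, mul_zero, zero_pow, ne_eq,
    OfNat.ofNat_ne_zero, not_false_eq_true, zero_div, sub_self] at key
  linarith [key]

lemma L2 {u : ℝ} (hu0 : 0 < u) (hu1 : u < 1) :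
    Real.log ((1+u)/(1-u)) ≤ 2*u + 2*u^3/3 + 2*u^5/(5*(1-u^2)) := by
  rw [Real.log_div (by linarith) (by linarith)]
  have key := deriv_aux (g := fun t => 2*t + 2*t^3/3 + 2*t^5/(5*(1-t^2))
      - (Real.log (1+t) - Real.log (1-t)))
    (g' := fun t => (2 + 2*t^2 + (10*t^4*(5*(1-t^2)) - 2*t^5*(5*(-2*t)))/(5*(1-t^2))^2)
      - ((1+t)⁻¹ + (1-t)⁻¹)) hu0
    (fun t ht => by
      obtain ⟨ht0, htu⟩ := ht
      have h1 : (1:ℝ) + t ≠ 0 := by linarith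
      have h2 : (1:ℝ) - t ≠ 0 := by nlinarith
      have h3 : 5*(1 - t^2) ≠ 0 := by nlinarith
      have d1 : HasDerivAt (fun t : ℝ => Real.log (1+t)) ((1+t)⁻¹) t := by
        simpa [Function.comp_def] using (Real.hasDerivAt_log h1).comp t ((hasDerivAt_id t).const_add 1)
      have d2 : HasDerivAt (fun t : ℝ => Real.log (1-t)) (-(1-t)⁻¹) t := by
        simpa [Function.comp_def] using (Real.hasDerivAt_log h2).comp t ((hasDerivAt_id t).const_sub 1)
      have d4 : HasDerivAt (fun t : ℝ => 5*(1-t^2)) (5*(0-2*t)) t := by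
        exact (((hasDerivAt_pow 2 t).const_sub 1).const_mul 5).congr_deriv (by ring)
      have d3 : HasDerivAt (fun t : ℝ => 2*t^5/(5*(1-t^2)))
          ((10*t^4*(5*(1-t^2)) - 2*t^5*(5*(-2*t)))/(5*(1-t^2))^2) t := by
        have := ((hasDerivAt_pow 5 t).const_mul 2).div d4 h3
        refine this.congr_deriv ?_
        ring
      have d5 : HasDerivAt (fun t : ℝ => 2*t + 2*t^3/3)
          (2 + 2*t^2) t := by
        have := ((hasDerivAt_id t).const_mul 2).add
          (((hasDerivAt_pow 3 t).const_mul 2).div_const 3)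
        refine this.congr_deriv ?_
        ring
      have := ((d5.add d3)).sub (d1.sub d2)
      refine this.congr_deriv ?_
      ring)
    (fun t ht => by
      obtain ⟨ht0, htu⟩ := ht
      have h1 : (0:ℝ) < 1 + t := by linarith
      have h2 : (0:ℝ) < 1 - t := by nlinarith
      have key : (2 + 2*t^2 + (10*t^4*(5*(1-t^2)) - 2*t^5*(5*(-2*t)))/(5*(1-t^2))^2)
          - ((1+t)⁻¹ + (1-t)⁻¹) = 4*t^6/(5*((1+t)*(1-t))^2) := by
        have h3 : (1:ℝ) - t^2 ≠ 0 := by nlinarith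
        have h4 : (1:ℝ) + t ≠ 0 := by linarith
        have h5 : (1:ℝ) - t ≠ 0 := by linarith
        field_simp
        ring
      rw [key]
      positivity)
  norm_num at key
  linarith [key]

lemma L3 {u : ℝ} (hu0 : 0 < u) (hu1 : u < 1) :
    Real.log ((1+u)/(1-u)) ≤ 2*u + 2*u^3/(3*(1-u^2)) := by
  have h := L2 hu0 hu1
  have h2 : (0:ℝ) < 1 - u^2 := by nlinarith
  have : 2*u^3/3 + 2*u^5/(5*(1-u^2)) ≤ 2*u^3/(3*(1-u^2)) := by
    rw [div_add_div _ _ (by norm_num) (by positivity), div_le_div_iff₀ (by positivity) (by positivity)]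
    nlinarith [pow_pos hu0 5, pow_pos hu0 3]
  linarith


lemma Lmid {q v u : ℝ} (hq0 : 0 < q) (hq1 : q ≤ 2/3) (hv0 : 0 < v) (hv1 : v < 1)
    (hu : u = q*v) :
    v/2 - v^3/6 ≤ Real.log ((1+u)/(1-u)) * ((1-u)*(1+u)/4) / q := by
  have hu0 : 0 < u := hu ▸ mul_pos hq0 hv0
  have hu23 : u < 2/3 := by rw [hu]; nlinarith
  have hu1 : u < 1 := by linarith
  have n5 : (0:ℝ) < 1 - u := by linarith
  have n6 : (0:ℝ) < 1 + u := by linarith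
  rw [le_div_iff₀ hq0]
  have hlow := L1 hu0 hu1
  have hstep1 : u/2 - 3*u^3/8 ≤ (2*u + 2*u^3/3 + 2*u^5/5 + 2*u^7/7) * ((1-u)*(1+u)/4) := by
    have hw : u^2 ≤ 4/9 := by nlinarith
    have h4 : u^4 ≤ (4/9)*u^2 := by nlinarith [sq_nonneg u]
    have h6 : u^6 ≤ (4/9)*u^4 := by nlinarith [sq_nonneg (u^2)]
    have hG : 0 ≤ 35 - 56*u^2 - 24*u^4 - 60*u^6 := by linarith
    have hid : (2*u + 2*u^3/3 + 2*u^5/5 + 2*u^7/7) * ((1-u)*(1+u)/4) - (u/2 - 3*u^3/8)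
        = u^3*(35 - 56*u^2 - 24*u^4 - 60*u^6)/840 := by ring
    linarith [hid, mul_nonneg (pow_pos hu0 3).le hG]
  have hstep2 : (v/2 - v^3/6) * q ≤ u/2 - 3*u^3/8 := by
    have hq49 : 0 ≤ 4 - 9*q^2 := by nlinarith
    have hid : (u/2 - 3*u^3/8) - (v/2 - v^3/6)*q = q*v^3*(4 - 9*q^2)/24 := by
      rw [hu]; ring
    linarith [hid, mul_nonneg (mul_nonneg hq0.le (pow_pos hv0 3).le) hq49]
  have hstep3 : (2*u + 2*u^3/3 + 2*u^5/5 + 2*u^7/7) * ((1-u)*(1+u)/4)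
      ≤ Real.log ((1+u)/(1-u)) * ((1-u)*(1+u)/4) := by
    apply mul_le_mul_of_nonneg_right hlow (by positivity)
  linarith

lemma Lrat {v A B : ℝ} (hv0 : 0 < v) (hv1 : v < 1)
    (hA : A ≤ 2*v/3 + 2*v^3/(9*(9-v^2)))
    (hB : B ≤ 2*v + 2*v^3/3 + 2*v^5/(5*(1-v^2))) :
    2 * (A + B) / (32*(3-v^2)/(((1-v)*(1+v))*((3-v)*(3+v)))) ≤ v/2 - v^3/6 := by
  have n1 : (0:ℝ) < 1 - v := by linarith
  have n2 : (0:ℝ) < 1 + v := by linarith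
  have n3 : (0:ℝ) < 3 - v := by linarith
  have n4 : (0:ℝ) < 3 + v := by linarith
  have h1v : (0:ℝ) < 1 - v^2 := by nlinarith
  have h9v : (0:ℝ) < 9 - v^2 := by nlinarith
  have h3v : (0:ℝ) < 3 - v^2 := by nlinarith
  have hDpos : (0:ℝ) < 32*(3-v^2)/(((1-v)*(1+v))*((3-v)*(3+v))) := by
    apply div_pos (by linarith) (mul_pos (mul_pos n1 n2) (mul_pos n3 n4))
  rw [div_le_iff₀ hDpos]
  have key : (v/2 - v^3/6) * (32*(3-v^2)/(((1-v)*(1+v))*((3-v)*(3+v))))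
      - 2*((2*v/3 + 2*v^3/(9*(9-v^2))) + (2*v + 2*v^3/3 + 2*v^5/(5*(1-v^2))))
      = (2*(200*v^3 + 148*v^5 - 12*v^7))/(45*((1-v^2)*(9-v^2))) := by
    field_simp
    ring
  have hv75 : v^7 ≤ v^5 := by nlinarith [pow_pos hv0 5]
  have hnum : (0:ℝ) ≤ 2*(200*v^3 + 148*v^5 - 12*v^7) := by
    nlinarith [pow_pos hv0 3, pow_pos hv0 5]
  have hpos : (0:ℝ) ≤ (2*(200*v^3 + 148*v^5 - 12*v^7))/(45*((1-v^2)*(9-v^2))) := by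
    apply div_nonneg hnum
    positivity
  linarith [key, hpos]



set_option maxHeartbeats 1000000 in
theorem stmt_13 (p : ℝ) (hp : p ∈ Ico (1 / 6 : ℝ) (1 / 2)) :
    (∀ x ∈ Ioo (0 : ℝ) (1 / 2),
      2 * (J (x / 2) - J ((1 - x) / 2)) / (1 / U (x / 2) + 1 / U ((1 - x) / 2)) ≤
        J (bconv x p) * U (bconv x p) / (1 - 2 * p)) ∧
    Tendsto (fun x => J (bconv x p) * U (bconv x p) / (1 - 2 * p) -
        2 * (J (x / 2) - J ((1 - x) / 2)) / (1 / U (x / 2) + 1 / U ((1 - x) / 2)))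
      (nhdsWithin (1 / 2) (Ioo (0 : ℝ) (1 / 2))) (nhds 0) := by
  constructor
  · -- the inequality
      obtain ⟨hp1, hp2⟩ := hp
      obtain ⟨q, rfl⟩ : ∃ q, p = (1-q)/2 := ⟨1-2*p, by ring⟩
      have hq0 : 0 < q := by linarith
      have hq1 : q ≤ 2/3 := by linarith
      rintro x ⟨hx0, hx2⟩
      obtain ⟨v, rfl⟩ : ∃ v, x = (1-v)/2 := ⟨1-2*x, by ring⟩
      have hv0 : 0 < v := by linarith
      have hv1 : v < 1 := by linarith
      obtain ⟨u, hu_def⟩ : ∃ u : ℝ, u = q*v := ⟨_, rfl⟩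
      have n1 : (0:ℝ) < 1 - v := by linarith
      have n2 : (0:ℝ) < 1 + v := by linarith
      have n3 : (0:ℝ) < 3 - v := by linarith
      have n4 : (0:ℝ) < 3 + v := by linarith
      have hu0 : 0 < u := hu_def ▸ mul_pos hq0 hv0
      have hu1 : u < 1 := by rw [hu_def]; nlinarith
      have n5 : (0:ℝ) < 1 - u := by linarith
      have n6 : (0:ℝ) < 1 + u := by linarith
      -- RHS rewrite
      have hbc : bconv ((1-v)/2) ((1-q)/2) = (1-u)/2 := by unfold bconv; rw [hu_def]; ring
      have hJs : J ((1-u)/2) = Real.log ((1+u)/(1-u)) := by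
        unfold J; congr 1
        rw [div_eq_div_iff (by linarith) (by linarith)]; ring
      have hUs : U ((1-u)/2) = (1-u)*(1+u)/4 := by unfold U; ring
      have h2p : 1 - 2*((1-q)/2) = q := by ring
      rw [hbc, hJs, hUs, h2p]
      -- LHS rewrites
      have e1 : (1-v)/2/2 = (1-v)/4 := by ring
      have e2 : (1 - (1-v)/2)/2 = (1+v)/4 := by ring
      rw [e1, e2]
      have hJ1 : J ((1-v)/4) = Real.log ((3+v)/(1-v)) := by
        unfold J; congr 1
        rw [div_eq_div_iff (by linarith) (by linarith)]; ring
      have hJ2 : J ((1+v)/4) = Real.log ((3-v)/(1+v)) := by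
        unfold J; congr 1
        rw [div_eq_div_iff (by linarith) (by linarith)]; ring
      have hU1 : U ((1-v)/4) = (1-v)*(3+v)/16 := by unfold U; ring
      have hU2 : U ((1+v)/4) = (1+v)*(3-v)/16 := by unfold U; ring
      rw [hJ1, hJ2, hU1, hU2]
      have hD : 1/((1-v)*(3+v)/16) + 1/((1+v)*(3-v)/16)
          = 32*(3-v^2)/(((1-v)*(1+v))*((3-v)*(3+v))) := by
        field_simp
        ring
      rw [hD]
      have hlogsplit : Real.log ((3+v)/(1-v)) - Real.log ((3-v)/(1+v))
          = Real.log ((3+v)/(3-v)) + Real.log ((1+v)/(1-v)) := by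
        rw [Real.log_div (by linarith) (by linarith), Real.log_div (by linarith) (by linarith),
          Real.log_div (by linarith) (by linarith), Real.log_div (by linarith) (by linarith)]
        ring
      rw [hlogsplit]
      -- bounds on the two logs
      have hBub : Real.log ((1+v)/(1-v)) ≤ 2*v + 2*v^3/3 + 2*v^5/(5*(1-v^2)) := L2 hv0 hv1
      have hAub : Real.log ((3+v)/(3-v)) ≤ 2*v/3 + 2*v^3/(9*(9-v^2)) := by
        have harg : (3+v)/(3-v) = (1+v/3)/(1-v/3) := by
          rw [div_eq_div_iff (by linarith) (by linarith)]; ring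
        have h9 : (0:ℝ) < 9 - v^2 := by nlinarith
        have e3 : 2*(v/3) + 2*(v/3)^3/(3*(1-(v/3)^2)) = 2*v/3 + 2*v^3/(9*(9-v^2)) := by
          have e4 : 2*(v/3)^3/(3*(1-(v/3)^2)) = 2*v^3/(9*(9-v^2)) := by
            rw [div_eq_div_iff (by nlinarith) (by nlinarith)]; ring
          rw [e4]; ring
        calc Real.log ((3+v)/(3-v)) = Real.log ((1+v/3)/(1-v/3)) := by rw [harg]
          _ ≤ 2*(v/3) + 2*(v/3)^3/(3*(1-(v/3)^2)) := L3 (by linarith) (by linarith)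
          _ = 2*v/3 + 2*v^3/(9*(9-v^2)) := e3
      calc 2 * (Real.log ((3+v)/(3-v)) + Real.log ((1+v)/(1-v)))
            / (32*(3-v^2)/(((1-v)*(1+v))*((3-v)*(3+v))))
          ≤ v/2 - v^3/6 := Lrat hv0 hv1 hAub hBub
        _ ≤ Real.log ((1+u)/(1-u)) * ((1-u)*(1+u)/4) / q := Lmid hq0 hq1 hv0 hv1 hu_def
  · -- the limit
      have hbcv : bconv (1/2) p = 1/2 := by unfold bconv; ring
      have hcbc : ContinuousAt (fun x => bconv x p) (1/2) := by
        unfold bconv; fun_prop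
      have hJb : ContinuousAt (fun x => J (bconv x p)) (1/2) := by
        simp only [J]
        apply ContinuousAt.log
        · exact (continuousAt_const.sub hcbc).div hcbc (by rw [hbcv]; norm_num)
        · rw [hbcv]; norm_num
      have hUb : ContinuousAt (fun x => U (bconv x p)) (1/2) := by
        unfold U bconv; fun_prop
      have hT1 : ContinuousAt (fun x => J (bconv x p) * U (bconv x p) / (1 - 2 * p)) (1/2) :=
        (hJb.mul hUb).div_const _
      have hJ1 : ContinuousAt (fun x : ℝ => J (x/2)) (1/2) := by
        simp only [J]
        apply ContinuousAt.log
        · apply ContinuousAt.div (by fun_prop) (by fun_prop)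
          norm_num
        · norm_num
      have hJ2 : ContinuousAt (fun x : ℝ => J ((1-x)/2)) (1/2) := by
        simp only [J]
        apply ContinuousAt.log
        · apply ContinuousAt.div (by fun_prop) (by fun_prop)
          norm_num
        · norm_num
      have hU1 : ContinuousAt (fun x : ℝ => 1 / U (x/2)) (1/2) := by
        simp only [U]
        apply ContinuousAt.div continuousAt_const (by fun_prop)
        norm_num
      have hU2 : ContinuousAt (fun x : ℝ => 1 / U ((1-x)/2)) (1/2) := by
        simp only [U]
        apply ContinuousAt.div continuousAt_const (by fun_prop)
        norm_num
      have hden : (1 / U ((1:ℝ)/2/2) + 1 / U ((1-(1:ℝ)/2)/2)) ≠ 0 := by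
        unfold U; norm_num
      have hT2 : ContinuousAt (fun x : ℝ =>
          2 * (J (x / 2) - J ((1 - x) / 2)) / (1 / U (x / 2) + 1 / U ((1 - x) / 2))) (1/2) := by
        apply ContinuousAt.div (((hJ1.sub hJ2)).const_mul 2) (hU1.add hU2) hden
      have hf : ContinuousAt (fun x => J (bconv x p) * U (bconv x p) / (1 - 2 * p) -
          2 * (J (x / 2) - J ((1 - x) / 2)) / (1 / U (x / 2) + 1 / U ((1 - x) / 2))) (1/2) :=
        hT1.sub hT2
      have hval : J (bconv (1/2) p) * U (bconv (1/2) p) / (1 - 2 * p) -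
          2 * (J ((1:ℝ)/2 / 2) - J ((1 - (1:ℝ)/2) / 2)) / (1 / U ((1:ℝ)/2 / 2) + 1 / U ((1 - (1:ℝ)/2) / 2)) = 0 := by
        rw [hbcv]
        unfold J U
        norm_num
      have := hf.continuousWithinAt (s := Ioo (0:ℝ) (1/2))
      have ht : Tendsto (fun x => J (bconv x p) * U (bconv x p) / (1 - 2 * p) -
          2 * (J (x / 2) - J ((1 - x) / 2)) / (1 / U (x / 2) + 1 / U ((1 - x) / 2)))
          (nhdsWithin (1/2) (Ioo (0:ℝ) (1/2)))
          (nhds (J (bconv (1/2) p) * U (bconv (1/2) p) / (1 - 2 * p) -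
          2 * (J ((1:ℝ)/2 / 2) - J ((1 - (1:ℝ)/2) / 2)) / (1 / U ((1:ℝ)/2 / 2) + 1 / U ((1 - (1:ℝ)/2) / 2)))) := this
      rwa [hval] at ht
end

section
/- Let h be the binary entropy function. The curve parametrized by s ∈ [0, 1/2] via R₀(s) = 1 - h(s(1-p) + (1-s)p), R₁(s) = (1/2)(h(s/2) + h((1-s)/2) - 1), for p = (√3 - 1)/(2√3), has slope dR₁/dR₀ = -1 at s = 1/2, i.e. lim_{s→1/2} R₁'(s)/R₀'(s) = -1. -/
open Set Filter

noncomputable def pp : ℝ := (Real.sqrt 3 - 1) / (2 * Real.sqrt 3)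

noncomputable def Nf (t : ℝ) : ℝ :=
  1 / 2 * ((Real.log (1 - t / 2) - Real.log (t / 2)) / Real.log 2 * (1 / 2) +
    (Real.log (1 - (1 - t) / 2) - Real.log ((1 - t) / 2)) / Real.log 2 * (-(1 / 2)))

noncomputable def Df (t : ℝ) : ℝ :=
  -((Real.log (1 - (t * (1 - pp) + (1 - t) * pp)) - Real.log (t * (1 - pp) + (1 - t) * pp)) /
      Real.log 2 * ((1 - pp) - pp))

lemma log2_ne : Real.log 2 ≠ 0 := (Real.log_pos one_lt_two).ne'

lemma s3_pos : (0:ℝ) < Real.sqrt 3 := Real.sqrt_pos.mpr (by norm_num)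

lemma s3_sq : Real.sqrt 3 ^ 2 = 3 := Real.sq_sqrt (by norm_num)

lemma s3_gt1 : (1:ℝ) < Real.sqrt 3 := by nlinarith [s3_pos, s3_sq]

lemma hq_eq : 1 - 2 * pp = (Real.sqrt 3)⁻¹ := by
  unfold pp
  field_simp
  ring

lemma pp_pos : 0 < pp := by
  unfold pp
  apply div_pos <;> nlinarith [s3_gt1, s3_pos]

lemma q_pos : 0 < 1 - 2 * pp := by rw [hq_eq]; exact inv_pos.mpr s3_pos

lemma q_sq : (1 - 2 * pp) ^ 2 = 1 / 3 := by
  rw [hq_eq, inv_pow, s3_sq]; norm_num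

lemma hasDerivAt_binent {x : ℝ} (h0 : 0 < x) (h1 : x < 1) :
    HasDerivAt binent ((Real.log (1 - x) - Real.log x) / Real.log 2) x := by
  have hx : x ≠ 0 := h0.ne'
  have hx1 : (1 : ℝ) - x ≠ 0 := sub_ne_zero.mpr (ne_of_lt h1).symm
  have Hlog : HasDerivAt (fun y : ℝ => Real.log y) (1 / x) x := by
    simpa using (hasDerivAt_id x).log hx
  have Hlog1 : HasDerivAt (fun y : ℝ => Real.log (1 - y)) ((-1) / (1 - x)) x :=
    ((hasDerivAt_id x).const_sub 1).log hx1
  have H := ((hasDerivAt_id x).neg.mul (Hlog.div_const (Real.log 2))).sub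
    (((hasDerivAt_id x).const_sub 1).mul (Hlog1.div_const (Real.log 2)))
  have H2 : HasDerivAt
      (fun y : ℝ => -y * (Real.log y / Real.log 2) - (1 - y) * (Real.log (1 - y) / Real.log 2))
      ((Real.log (1 - x) - Real.log x) / Real.log 2) x := by
    refine H.congr_deriv (Eq.symm ?_)
    simp only [Pi.neg_apply, id_eq]
    field_simp
    ring
  exact H2

lemma hasDerivAt_num {t : ℝ} (h0 : 0 < t) (h1 : t < 1) :
    HasDerivAt (fun t : ℝ => 1 / 2 * (binent (t / 2) + binent ((1 - t) / 2) - 1)) (Nf t) t := by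
  have hA := (hasDerivAt_binent (x := t / 2) (by linarith) (by linarith)).comp t
    ((hasDerivAt_id t).div_const 2)
  have hB := (hasDerivAt_binent (x := (1 - t) / 2) (by linarith) (by linarith)).comp t
    (((hasDerivAt_id t).const_sub 1).div_const 2)
  have H := ((hA.add hB).sub_const 1).const_mul (1 / 2 : ℝ)
  refine H.congr_deriv (Eq.symm ?_)
  unfold Nf; ring

lemma hasDerivAt_den {t : ℝ} (h0 : 0 < t * (1 - pp) + (1 - t) * pp)
    (h1 : t * (1 - pp) + (1 - t) * pp < 1) :
    HasDerivAt (fun t : ℝ => 1 - binent (t * (1 - pp) + (1 - t) * pp)) (Df t) t := by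
  have hu : HasDerivAt (fun t : ℝ => t * (1 - pp) + (1 - t) * pp) (1 * (1 - pp) + -1 * pp) t :=
    ((hasDerivAt_id t).mul_const (1 - pp)).add (((hasDerivAt_id t).const_sub 1).mul_const pp)
  have H := ((hasDerivAt_binent h0 h1).comp t hu).const_sub 1
  refine H.congr_deriv (Eq.symm ?_)
  unfold Df; ring

lemma Nf_c : Nf (1 / 2) = 0 := by unfold Nf; ring

lemma Df_c : Df (1 / 2) = 0 := by
  unfold Df
  rw [show (1/2:ℝ) * (1 - pp) + (1 - 1/2) * pp = 1/2 by ring]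
  norm_num

lemma hasDerivAt_Nf : HasDerivAt Nf (-(4 / 3) / Real.log 2) (1 / 2 : ℝ) := by
  have L1 := (((hasDerivAt_id (1/2:ℝ)).div_const 2).const_sub 1).log (by norm_num)
  have L2 := ((hasDerivAt_id (1/2:ℝ)).div_const 2).log (by norm_num)
  have L3 := ((((hasDerivAt_id (1/2:ℝ)).const_sub 1).div_const 2).const_sub 1).log (by norm_num)
  have L4 := (((hasDerivAt_id (1/2:ℝ)).const_sub 1).div_const 2).log (by norm_num)
  have H := ((((L1.sub L2).div_const (Real.log 2)).mul_const (1/2 : ℝ)).add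
      (((L3.sub L4).div_const (Real.log 2)).mul_const (-(1/2) : ℝ))).const_mul (1/2 : ℝ)
  unfold Nf
  refine H.congr_deriv (Eq.symm ?_)
  simp only [id_eq]
  norm_num
  field_simp
  ring

lemma hasDerivAt_Df : HasDerivAt Df ((4 / 3) / Real.log 2) (1 / 2 : ℝ) := by
  have hval : (1/2:ℝ) * (1 - pp) + (1 - 1/2) * pp = 1/2 := by ring
  have hu : HasDerivAt (fun t : ℝ => t * (1 - pp) + (1 - t) * pp) (1 * (1 - pp) + -1 * pp)
      (1/2 : ℝ) :=
    ((hasDerivAt_id _).mul_const (1 - pp)).add (((hasDerivAt_id _).const_sub 1).mul_const pp)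
  have l1 := (hu.const_sub 1).log (by rw [hval]; norm_num)
  have l2 := hu.log (by rw [hval]; norm_num)
  have H := (((l1.sub l2).div_const (Real.log 2)).mul_const ((1 - pp) - pp)).neg
  unfold Df
  refine H.congr_deriv (Eq.symm ?_)
  rw [hval]
  have hq := q_sq
  field_simp
  linear_combination (-12) * hq

theorem stmt_17 :
    let p : ℝ := (Real.sqrt 3 - 1) / (2 * Real.sqrt 3)
    Tendsto
      (fun s => deriv (fun t => (1 / 2) * (binent (t / 2) + binent ((1 - t) / 2) - 1)) s /
        deriv (fun t => 1 - binent (t * (1 - p) + (1 - t) * p)) s)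
      (nhdsWithin (1 / 2) (Ico (0 : ℝ) (1 / 2))) (nhds (-1)) := by
  intro p
  have hp : p = pp := rfl
  simp only [hp]
  have hle : nhdsWithin (1/2 : ℝ) (Ico (0:ℝ) (1/2)) ≤ nhdsWithin (1/2 : ℝ) {(1/2:ℝ)}ᶜ :=
    nhdsWithin_mono _ (fun x hx => Set.mem_compl_singleton_iff.mpr (ne_of_lt hx.2))
  have hA : Tendsto (slope Nf (1/2)) (nhdsWithin (1/2 : ℝ) (Ico (0:ℝ) (1/2)))
      (nhds (-(4/3) / Real.log 2)) :=
    (hasDerivAt_iff_tendsto_slope.mp hasDerivAt_Nf).mono_left hle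
  have hB : Tendsto (slope Df (1/2)) (nhdsWithin (1/2 : ℝ) (Ico (0:ℝ) (1/2)))
      (nhds ((4/3) / Real.log 2)) :=
    (hasDerivAt_iff_tendsto_slope.mp hasDerivAt_Df).mono_left hle
  have hBne : (4/3 : ℝ) / Real.log 2 ≠ 0 := div_ne_zero (by norm_num) log2_ne
  have hdiv := hA.div hB hBne
  have hlim : (-(4/3:ℝ) / Real.log 2) / ((4/3) / Real.log 2) = -1 := by
    field_simp
  rw [hlim] at hdiv
  refine hdiv.congr' ?_
  filter_upwards [mem_nhdsWithin_of_mem_nhds (isOpen_Ioo.mem_nhds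
      (by norm_num : (1/2:ℝ) ∈ Ioo (0:ℝ) 1)), self_mem_nhdsWithin] with s hs1 hs2
  obtain ⟨hs0, -⟩ := hs1
  obtain ⟨-, hsc⟩ := hs2
  have hq := q_pos
  have hpp := pp_pos
  have hu0 : 0 < s * (1 - pp) + (1 - s) * pp := by nlinarith [mul_pos hs0 hq]
  have hu1 : s * (1 - pp) + (1 - s) * pp < 1 := by
    nlinarith [mul_pos (by linarith : (0:ℝ) < 1/2 - s) hq]
  have hne : s - 1/2 ≠ 0 := sub_ne_zero.mpr (ne_of_lt hsc)
  simp only [Pi.div_apply]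
  rw [slope_def_field, slope_def_field, Nf_c, Df_c, sub_zero, sub_zero,
    (hasDerivAt_num hs0 (by linarith)).deriv, (hasDerivAt_den hu0 hu1).deriv,
    div_div_div_comm, div_self hne, div_one]
end

section
/- For all t ∈ (0, 1/2], the inequality h(1/4) - 1/2 ≥ (1/2)(h(t/2) + h((1-t)/2) - 1) holds, with equality iff t = 1/2, where h is the binary entropy function. -/
open Set

lemma key : ∀ t : ℝ, t ∈ Ioc (0 : ℝ) (1 / 2) → t ≠ 1 / 2 →
    binent (t / 2) + binent ((1 - t) / 2) < 2 * binent (1 / 4) := by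
  intro t ht hne
  obtain ⟨ht0, ht1⟩ := ht
  have hlog : (0:ℝ) < Real.log 2 := Real.log_pos (by norm_num)
  have ha : t / 2 ∈ Icc (0:ℝ) 1 := ⟨by linarith, by linarith⟩
  have hb : (1 - t) / 2 ∈ Icc (0:ℝ) 1 := ⟨by linarith, by linarith⟩
  have hab : t / 2 ≠ (1 - t) / 2 := by
    intro h; apply hne; linarith [congrArg (· * 2) h]
  have := Real.strictConcave_binEntropy.2 ha hb hab (by norm_num : (0:ℝ) < 1/2)
    (by norm_num : (0:ℝ) < 1/2) (by norm_num)
  simp only [smul_eq_mul] at this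
  have hmid : (1/2 : ℝ) * (t/2) + (1/2 : ℝ) * ((1-t)/2) = 1/4 := by ring
  rw [hmid] at this
  rw [binent_eq, binent_eq, binent_eq]
  rw [← add_div, div_lt_iff₀ hlog]
  have h2 : 2 * (Real.binEntropy (1/4) / Real.log 2) * Real.log 2
      = 2 * Real.binEntropy (1/4) := by field_simp
  rw [h2]; linarith

theorem stmt_19 : ∀ t ∈ Ioc (0 : ℝ) (1 / 2),
    (1 / 2) * (binent (t / 2) + binent ((1 - t) / 2) - 1) ≤ binent (1 / 4) - 1 / 2 ∧
      ((1 / 2) * (binent (t / 2) + binent ((1 - t) / 2) - 1) = binent (1 / 4) - 1 / 2 ↔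
        t = 1 / 2) := by
  intro t ht
  by_cases hne : t = 1 / 2
  · subst hne
    norm_num
    exact ⟨by linarith [le_refl (binent (1/4))], by ring⟩
  · have h := key t ht hne
    constructor
    · linarith
    · constructor
      · intro h'; exfalso; linarith
      · intro h'; exact absurd h' hne
end
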